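/- arXiv:1707.00228 — 4 statements merged into one kernel-verified Lean document; each statement's English description precedes it below -/
import Mathlib

section
/- Let G be a simple graph on a vertex type V, let A be a nonempty finite type (the agents), let α₀, α₊ : A → V be start and goal assignments, and let α : ℕ → A → V be a solution trajectory satisfying: (i) α(0) = α₀; (ii) for every t and every agent a, either α(t+1)(a) = α(t)(a) or α(t)(a) is adjacent to α(t+1)(a) in G; and (iii) for every agent a there exists a time after which α(t)(a) = α₊(a) forever. For each agent a define its individual cost ξ(a) as the least time t such that α(t')(a) = α₊(a) for all t' ≥ t, and define the sum-of-costs ξ = ∑_{a∈A} ξ(a), the makespan μ = max_{a∈A} ξ(a), ξ₀ = ∑_{a∈A} dist_G(α₀(a), α₊(a)), μ₀ = max_{a∈A} dist_G(α₀(a), α₊(a)), and Δ = ξ − ξ₀. Then ξ₀ ≤ ξ and μ ≤ μ₀ + Δ. -/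
/-- Proposition 1: for any MAPF solution trajectory, the sum of individual
shortest-path costs `ξ₀` is a lower bound on the sum-of-costs `ξ`, and the
makespan `μ` is at most `μ₀ + Δ` where `Δ = ξ − ξ₀`. -/
theorem mapf_sic_lower_bound_and_makespan_bound
    {V : Type*} (G : SimpleGraph V) {A : Type*} [Fintype A] [Nonempty A]
    (α₀ αg : A → V) (α : ℕ → A → V)
    (hstart : α 0 = α₀)
    (hstep : ∀ (t : ℕ) (a : A),
      α (t + 1) a = α t a ∨ G.Adj (α t a) (α (t + 1) a))
    (hgoal : ∀ a : A, ∃ t : ℕ, ∀ t' ≥ t, α t' a = αg a)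
    (ξc : A → ℕ)
    (hξc : ∀ a : A, IsLeast {t : ℕ | ∀ t' ≥ t, α t' a = αg a} (ξc a)) :
    (∑ a : A, G.dist (α₀ a) (αg a)) ≤ (∑ a : A, ξc a) ∧
      Finset.univ.sup ξc ≤
        Finset.univ.sup (fun a : A => G.dist (α₀ a) (αg a)) +
          ((∑ a : A, ξc a) - ∑ a : A, G.dist (α₀ a) (αg a)) := by
  -- key: per-agent distance bound
  have hwalk : ∀ (a : A) (t : ℕ), ∃ w : G.Walk (α 0 a) (α t a), w.length ≤ t := by
    intro a t
    induction t with
    | zero => exact ⟨SimpleGraph.Walk.nil, le_refl _⟩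
    | succ n ih =>
      obtain ⟨w, hw⟩ := ih
      rcases hstep n a with h | h
      · exact ⟨w.copy rfl h.symm, by simpa using hw.trans (Nat.le_succ n)⟩
      · refine ⟨w.concat h, ?_⟩
        rw [SimpleGraph.Walk.length_concat]
        omega
  have hkey : ∀ a : A, G.dist (α₀ a) (αg a) ≤ ξc a := by
    intro a
    have hgoalat : α (ξc a) a = αg a := (hξc a).1 (ξc a) (le_refl _)
    obtain ⟨w, hw⟩ := hwalk a (ξc a)
    calc G.dist (α₀ a) (αg a) = G.dist (α 0 a) (α (ξc a) a) := by rw [hstart, hgoalat]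
    _ ≤ w.length := SimpleGraph.dist_le w
    _ ≤ ξc a := hw
  have hsum : (∑ a : A, G.dist (α₀ a) (αg a)) ≤ (∑ a : A, ξc a) :=
    Finset.sum_le_sum fun a _ => hkey a
  refine ⟨hsum, ?_⟩
  apply Finset.sup_le
  intro a _
  have h1 : G.dist (α₀ a) (αg a) ≤ Finset.univ.sup (fun a : A => G.dist (α₀ a) (αg a)) :=
    Finset.le_sup (f := fun a : A => G.dist (α₀ a) (αg a)) (Finset.mem_univ a)
  -- ∑ d + ξc a ≤ ∑ ξc + d a
  classical
  have h2 : (∑ b : A, G.dist (α₀ b) (αg b)) + ξc a ≤ (∑ b : A, ξc b) + G.dist (α₀ a) (αg a) := by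
    rw [← Finset.add_sum_erase _ _ (Finset.mem_univ a),
        ← Finset.add_sum_erase _ ξc (Finset.mem_univ a)]
    have h3 : (∑ b ∈ Finset.univ.erase a, G.dist (α₀ b) (αg b)) ≤
        ∑ b ∈ Finset.univ.erase a, ξc b :=
      Finset.sum_le_sum fun b _ => hkey b
    omega
  have := hkey a
  omega
end

section
/- Let Sol be a type (the solutions of a MAPF instance), let ξ, μ : Sol → ℕ be its sum-of-costs and makespan functions, and let ξ₀, μ₀, Δ, δ : ℕ with Δ ≥ 1. Assume: (i) for every solution s, ξ₀ ≤ ξ(s) and μ(s) ≤ μ₀ + (ξ(s) − ξ₀) (the conclusion of Proposition 1); (ii) there is no solution s with μ(s) ≤ μ₀ + Δ − 1 and ξ(s) ≤ ξ₀ + Δ + δ − 1 (the formula of the penultimate iteration is unsatisfiable); and (iii) there exists a solution s* with ξ(s*) ≤ ξ₀ + Δ + δ (the formula of the last iteration is satisfiable and s* is the solution it represents). Then ξ₀ + Δ ≤ ξ(s) for every solution s, and consequently ξ(s*) ≤ ξ(s) + δ for every solution s; in particular ξ(s*) ≤ ξ_opt + δ where ξ_opt is the minimum of ξ over Sol. 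-/
/-- Proposition 2: if the penultimate iteration's formula is unsatisfiable and
the last one is satisfiable with solution `s*`, then every solution has
sum-of-costs at least `ξ₀ + Δ`, hence `ξ s* ≤ ξ_opt + δ`. -/
theorem emddsat_suboptimality_bound
    {Sol : Type*} (ξ μ : Sol → ℕ) (ξ₀ μ₀ Δ δ : ℕ) (hΔ : 1 ≤ Δ)
    (hprop1 : ∀ s : Sol, ξ₀ ≤ ξ s ∧ μ s ≤ μ₀ + (ξ s - ξ₀))
    (hunsat : ¬ ∃ s : Sol, μ s ≤ μ₀ + Δ - 1 ∧ ξ s ≤ ξ₀ + Δ + δ - 1)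
    (s' : Sol) (hsat : ξ s' ≤ ξ₀ + Δ + δ) :
    (∀ s : Sol, ξ₀ + Δ ≤ ξ s) ∧
      (∀ s : Sol, ξ s' ≤ ξ s + δ) ∧
      ξ s' ≤ (⨅ s : Sol, ξ s) + δ := by
  have h1 : ∀ s : Sol, ξ₀ + Δ ≤ ξ s := by
    intro s
    by_contra h
    push_neg at h
    exact hunsat ⟨s, by have := (hprop1 s).2; omega, by omega⟩
  have h2 : ∀ s : Sol, ξ s' ≤ ξ s + δ := fun s => by have := h1 s; omega
  refine ⟨h1, h2, ?_⟩
  have hmem : sInf (Set.range ξ) ∈ Set.range ξ :=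
    Nat.sInf_mem ⟨ξ s', s', rfl⟩
  obtain ⟨s₀, hs₀⟩ := hmem
  calc ξ s' ≤ ξ s₀ + δ := h2 s₀
    _ = (⨅ s : Sol, ξ s) + δ := by rw [iInf, hs₀]
end

section
/- Let Sol be a type (the solutions of a MAPF instance), let ξ, μ : Sol → ℕ be its sum-of-costs and makespan functions, let ξ₀, μ₀, Δ : ℕ with Δ ≥ 1, let ε > 0 be a real number, and let δ : ℕ with (δ : ℝ) ≤ ε · (ξ₀ + Δ). Assume: (i) for every solution s, ξ₀ ≤ ξ(s) and μ(s) ≤ μ₀ + (ξ(s) − ξ₀); (ii) there is no solution s with μ(s) ≤ μ₀ + Δ − 1 and ξ(s) ≤ ξ₀ + Δ + δ − 1; and (iii) there exists a solution s* with ξ(s*) ≤ ξ₀ + Δ + δ. Then for every solution s, (ξ(s*) : ℝ) ≤ (1 + ε) · ξ(s); in particular ξ(s*) ≤ (1 + ε) · ξ_opt where ξ_opt is the minimum of ξ over Sol. -/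
/-- Corollary 1: choosing `δ ≤ ε · (ξ₀ + Δ)` makes the returned solution
`(1 + ε)`-bounded suboptimal. -/
theorem emddsat_eps_bounded_suboptimal
    {Sol : Type*} (ξ μ : Sol → ℕ) (ξ₀ μ₀ Δ : ℕ) (hΔ : 1 ≤ Δ)
    (ε : ℝ) (hε : 0 < ε) (δ : ℕ) (hδ : (δ : ℝ) ≤ ε * (ξ₀ + Δ))
    (hprop1 : ∀ s : Sol, ξ₀ ≤ ξ s ∧ μ s ≤ μ₀ + (ξ s - ξ₀))
    (hunsat : ¬ ∃ s : Sol, μ s ≤ μ₀ + Δ - 1 ∧ ξ s ≤ ξ₀ + Δ + δ - 1)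
    (s' : Sol) (hsat : ξ s' ≤ ξ₀ + Δ + δ) :
    (∀ s : Sol, (ξ s' : ℝ) ≤ (1 + ε) * (ξ s : ℝ)) ∧
      (ξ s' : ℝ) ≤ (1 + ε) * ((⨅ s : Sol, ξ s : ℕ) : ℝ) := by
  have key : ∀ s : Sol, ξ₀ + Δ ≤ ξ s := by
    intro s
    obtain ⟨h1, h2⟩ := hprop1 s
    by_cases hm : μ s ≤ μ₀ + Δ - 1
    · have hx : ¬ ξ s ≤ ξ₀ + Δ + δ - 1 := fun h => hunsat ⟨s, hm, h⟩
      omega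
    · omega
  have main : ∀ s : Sol, (ξ s' : ℝ) ≤ (1 + ε) * (ξ s : ℝ) := by
    intro s
    have hk : ((ξ₀ + Δ : ℕ) : ℝ) ≤ (ξ s : ℝ) := by exact_mod_cast key s
    have h1 : (ξ s' : ℝ) ≤ ((ξ₀ + Δ + δ : ℕ) : ℝ) := by exact_mod_cast hsat
    have h2 : ((ξ₀ + Δ + δ : ℕ) : ℝ) ≤ (1 + ε) * ((ξ₀ + Δ : ℕ) : ℝ) := by
      push_cast
      nlinarith
    have h3 : (1 + ε) * ((ξ₀ + Δ : ℕ) : ℝ) ≤ (1 + ε) * (ξ s : ℝ) := by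
      apply mul_le_mul_of_nonneg_left hk
      linarith
    linarith
  refine ⟨main, ?_⟩
  have hne : (Set.range ξ).Nonempty := ⟨ξ s', s', rfl⟩
  have hmem : (⨅ s : Sol, ξ s) ∈ Set.range ξ := by
    rw [iInf]
    exact Nat.sInf_mem hne
  obtain ⟨s, hs⟩ := hmem
  rw [← hs]
  exact main s
end

section
/- Let Sol be a type (the solutions of a MAPF instance), let ξ, μ : Sol → ℕ be its sum-of-costs and makespan functions, let k ≥ 1 be a natural number (the number of agents), and let ξ₀, μ₀, Δ : ℕ with Δ ≥ 1 and ξ₀ + Δ ≥ 1. Assume: (i) for every solution s, ξ₀ ≤ ξ(s), μ(s) ≤ μ₀ + (ξ(s) − ξ₀), and ξ(s) ≤ k · μ(s) (the sum of the k individual costs is at most k times their maximum); (ii) there is no solution s with ξ(s) ≤ ξ₀ + Δ − 1; and (iii) there exists a solution s* with μ(s*) ≤ μ₀ + Δ. Then for every solution s, (ξ(s*) : ℝ) ≤ (k · (μ₀ + Δ) / (ξ₀ + Δ)) · ξ(s); i.e., the returned solution is (k·(μ₀+Δ)/(ξ₀+Δ))-bounded suboptimal. -/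
/-- Worst-case bound: with the cardinality constraint fully relaxed, the
returned solution is `(k·(μ₀+Δ)/(ξ₀+Δ))`-bounded suboptimal. -/
theorem emddsat_worst_case_bound
    {Sol : Type*} (ξ μ : Sol → ℕ) (k : ℕ) (hk : 1 ≤ k)
    (ξ₀ μ₀ Δ : ℕ) (hΔ : 1 ≤ Δ) (hpos : 1 ≤ ξ₀ + Δ)
    (hprop1 : ∀ s : Sol, ξ₀ ≤ ξ s ∧ μ s ≤ μ₀ + (ξ s - ξ₀) ∧ ξ s ≤ k * μ s)
    (hunsat : ¬ ∃ s : Sol, ξ s ≤ ξ₀ + Δ - 1)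
    (s' : Sol) (hsat : μ s' ≤ μ₀ + Δ) :
    ∀ s : Sol,
      (ξ s' : ℝ) ≤ ((k : ℝ) * ((μ₀ : ℝ) + (Δ : ℝ)) / ((ξ₀ : ℝ) + (Δ : ℝ))) * (ξ s : ℝ) := by
  intro s
  push_neg at hunsat
  have hs : ξ₀ + Δ ≤ ξ s := by have := hunsat s; omega
  have hden : (0 : ℝ) < (ξ₀ : ℝ) + (Δ : ℝ) := by
    have : (0:ℕ) < ξ₀ + Δ := hpos
    exact_mod_cast this
  have h1 : (ξ s' : ℝ) ≤ (k : ℝ) * ((μ₀ : ℝ) + (Δ : ℝ)) := by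
    have h := (hprop1 s').2.2
    have : ξ s' ≤ k * (μ₀ + Δ) := h.trans (Nat.mul_le_mul_left k hsat)
    exact_mod_cast this
  have h2 : (ξ₀ : ℝ) + (Δ : ℝ) ≤ (ξ s : ℝ) := by exact_mod_cast hs
  calc (ξ s' : ℝ) ≤ (k : ℝ) * ((μ₀ : ℝ) + (Δ : ℝ)) := h1
    _ = ((k : ℝ) * ((μ₀ : ℝ) + (Δ : ℝ)) / ((ξ₀ : ℝ) + (Δ : ℝ))) * ((ξ₀ : ℝ) + (Δ : ℝ)) := by
        field_simp
    _ ≤ ((k : ℝ) * ((μ₀ : ℝ) + (Δ : ℝ)) / ((ξ₀ : ℝ) + (Δ : ℝ))) * (ξ s : ℝ) := by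
        apply mul_le_mul_of_nonneg_left h2
        positivity
end
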